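/- (Hilbert's second identity.) Let n, k : ℕ, let m : ℕ with m ≤ nk, let λ = (λ_1 ≥ ⋯ ≥ λ_k ≥ 0) be a partition of m with λ_1 ≤ n, and set c = nk − 2m ∈ ℤ. Then for every i ≥ 1, D^i(Δ(a_λ)) − Δ(D^i(a_λ)) = i·(c + i − 1) · D^{i-1}(a_λ), where the scalar i·(c + i − 1) is taken in ℚ via the cast from ℤ. -/

import Mathlib

open MvPolynomial

/-- The operator `D(I) = Σ_{i=1}^{n} i · a_{i-1} · ∂I/∂a_i`. -/
noncomputable def Dop (n : ℕ) :
    MvPolynomial (Fin (n+1)) ℚ →ₗ[ℚ] MvPolynomial (Fin (n+1)) ℚ :=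
  ∑ i : Fin n, ((i : ℚ) + 1) •
    ((LinearMap.mulLeft ℚ (X i.castSucc)).comp (pderiv i.succ).toLinearMap)

/-- The operator `Δ(I) = Σ_{i=0}^{n-1} (n-i) · a_{i+1} · ∂I/∂a_i`. -/
noncomputable def Δop (n : ℕ) :
    MvPolynomial (Fin (n+1)) ℚ →ₗ[ℚ] MvPolynomial (Fin (n+1)) ℚ :=
  ∑ i : Fin n, ((n : ℚ) - (i : ℚ)) •
    ((LinearMap.mulLeft ℚ (X i.succ)).comp (pderiv i.castSucc).toLinearMap)

/-- `Q_n(k,m)`: span of monomials of degree `k` and weight `m`. -/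
noncomputable def Qspace (n k m : ℕ) : Submodule ℚ (MvPolynomial (Fin (n+1)) ℚ) :=
  Submodule.span ℚ { p | ∃ ν : Fin (n+1) →₀ ℕ,
    (∑ i : Fin (n+1), ν i) = k ∧ (∑ i : Fin (n+1), (i : ℕ) * ν i) = m ∧ p = monomial ν (1 : ℚ) }

/-- `S_n(k,m)`: semi-invariants of degree `k` and weight `m`. -/
noncomputable def Sspace (n k m : ℕ) : Submodule ℚ (MvPolynomial (Fin (n+1)) ℚ) :=
  Qspace n k m ⊓ LinearMap.ker (Dop n)

/-- `p(k,n,m)`: number of partitions of `m` in a `k × n` rectangle. -/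
def pRect (k n m : ℕ) : ℕ :=
  (Finset.univ.filter
    (fun P : Nat.Partition m => Multiset.card P.parts ≤ k ∧ ∀ x ∈ P.parts, x ≤ n)).card

/-- Coefficient embedding `ℚ[a] → ℚ[z][a]`. -/
noncomputable def ιmap (n : ℕ) :
    MvPolynomial (Fin (n+1)) ℚ →+* MvPolynomial (Fin (n+1)) (Polynomial ℚ) :=
  MvPolynomial.map (Polynomial.C)

/-- The shear substitution `a_i ↦ a_i' = Σ_{j=0}^{i} C(i,j) a_{i-j} z^j`. -/
noncomputable def φmap (n : ℕ) :
    MvPolynomial (Fin (n+1)) ℚ →ₐ[ℚ] MvPolynomial (Fin (n+1)) (Polynomial ℚ) :=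
  aeval (fun i : Fin (n+1) => ∑ j ∈ Finset.range ((i : ℕ) + 1),
    (C ((Nat.choose (i : ℕ) j : Polynomial ℚ) * Polynomial.X ^ j)) *
      X (⟨(i : ℕ) - j, Nat.lt_of_le_of_lt (Nat.sub_le _ _) i.isLt⟩ : Fin (n+1)))

/-- The vertical shear substitution `a_i ↦ a_i'' = Σ_{j=0}^{n-i} C(n-i,j) a_{i+j} z^j`. -/
noncomputable def ψmap (n : ℕ) :
    MvPolynomial (Fin (n+1)) ℚ →ₐ[ℚ] MvPolynomial (Fin (n+1)) (Polynomial ℚ) :=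
  aeval (fun i : Fin (n+1) => ∑ j ∈ (Finset.range (n - (i : ℕ) + 1)).attach,
    (C ((Nat.choose (n - (i : ℕ)) j.1 : Polynomial ℚ) * Polynomial.X ^ j.1)) *
      X (⟨(i : ℕ) + j.1, by
        have h1 := Finset.mem_range.mp j.2
        have h2 := i.isLt
        omega⟩ : Fin (n+1)))

/-- The weighted total degree of `I`: max of `Σ_i i·ν_i` over monomials of `I`. -/
def wdeg (n : ℕ) (I : MvPolynomial (Fin (n+1)) ℚ) : ℕ :=
  I.support.sup (fun ν => ∑ i : Fin (n+1), (i : ℕ) * ν i)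


noncomputable abbrev Rng (n : ℕ) := MvPolynomial (Fin (n+1)) ℚ

noncomputable def Dder (n : ℕ) : Derivation ℚ (Rng n) (Rng n) :=
  ∑ i : Fin n, ((i : ℚ) + 1) • ((X i.castSucc : Rng n) • pderiv i.succ)

noncomputable def Δder (n : ℕ) : Derivation ℚ (Rng n) (Rng n) :=
  ∑ i : Fin n, ((n : ℚ) - (i : ℚ)) • ((X i.succ : Rng n) • pderiv i.castSucc)

noncomputable def Hder (n : ℕ) : Derivation ℚ (Rng n) (Rng n) :=
  mkDerivation ℚ (fun s : Fin (n+1) => ((n : ℚ) - 2 * (s : ℕ)) • X s)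

lemma der_sum_apply {n : ℕ} {ι : Type*} (s : Finset ι)
    (f : ι → Derivation ℚ (Rng n) (Rng n)) (p : Rng n) :
    (∑ i ∈ s, f i) p = ∑ i ∈ s, f i p := by
  have h := congrFun (map_sum (Derivation.coeFnAddMonoidHom (R := ℚ) (A := Rng n) (M := Rng n)) f s) p
  rw [Derivation.coeFnAddMonoidHom] at h
  simp only [AddMonoidHom.coe_mk, ZeroHom.coe_mk, Finset.sum_apply] at h
  exact h

lemma Dder_X_zero {n : ℕ} : Dder n (X (0 : Fin (n+1))) = 0 := by
  rw [Dder, der_sum_apply]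
  apply Finset.sum_eq_zero
  intro i _
  rw [Derivation.smul_apply, Derivation.smul_apply,
    pderiv_X_of_ne (Fin.succ_ne_zero i).symm]
  simp

lemma Dder_X_succ {n : ℕ} (j : Fin n) :
    Dder n (X j.succ) = ((j : ℚ) + 1) • X j.castSucc := by
  rw [Dder, der_sum_apply]
  rw [Finset.sum_eq_single_of_mem j (Finset.mem_univ j)]
  · rw [Derivation.smul_apply, Derivation.smul_apply, pderiv_X_self]
    simp [smul_eq_mul]
  · intro i _ hij
    rw [Derivation.smul_apply, Derivation.smul_apply,
      pderiv_X_of_ne (fun h => hij (Fin.succ_injective _ h).symm)]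
    simp

lemma Δder_X_last {n : ℕ} : Δder n (X (Fin.last n)) = 0 := by
  rw [Δder, der_sum_apply]
  apply Finset.sum_eq_zero
  intro i _
  rw [Derivation.smul_apply, Derivation.smul_apply,
    pderiv_X_of_ne (Fin.castSucc_lt_last i).ne']
  simp

lemma Δder_X_castSucc {n : ℕ} (j : Fin n) :
    Δder n (X j.castSucc) = ((n : ℚ) - (j : ℚ)) • X j.succ := by
  rw [Δder, der_sum_apply]
  rw [Finset.sum_eq_single_of_mem j (Finset.mem_univ j)]
  · rw [Derivation.smul_apply, Derivation.smul_apply, pderiv_X_self]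
    simp [smul_eq_mul]
  · intro i _ hij
    rw [Derivation.smul_apply, Derivation.smul_apply,
      pderiv_X_of_ne (fun h => hij (Fin.castSucc_injective _ h).symm)]
    simp

lemma Hder_X {n : ℕ} (s : Fin (n+1)) :
    Hder n (X s) = ((n : ℚ) - 2 * (s : ℕ)) • X s := mkDerivation_X _ _ _

lemma bracket_DΔ {n : ℕ} : ⁅Dder n, Δder n⁆ = Hder n := by
  apply derivation_ext
  intro s
  rw [Derivation.commutator_apply, Hder_X]
  induction s using Fin.lastCases with
  | last =>
    rw [Δder_X_last, map_zero, zero_sub]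
    cases n with
    | zero =>
      rw [show (Fin.last 0) = (0 : Fin 1) by rfl, Dder_X_zero, map_zero]
      simp
    | succ n' =>
      rw [show Fin.last (n'+1) = (Fin.last n').succ from (Fin.succ_last n').symm,
        Dder_X_succ, Derivation.map_smul, Δder_X_castSucc, Fin.succ_last]
      rw [smul_smul, ← neg_smul]
      congr 1
      have : ((Fin.last n' : ℕ) : ℚ) = (n' : ℚ) := by norm_num
      rw [this]
      push_cast
      ring
  | cast j =>
    rw [Δder_X_castSucc, Derivation.map_smul]
    cases n with
    | zero => exact j.elim0
    | succ n' =>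
      induction j using Fin.cases with
      | zero =>
        rw [Fin.castSucc_zero, Dder_X_zero, map_zero, sub_zero, Dder_X_succ,
          smul_smul, Fin.castSucc_zero]
        congr 1
        simp
      | succ j' =>
        rw [Dder_X_succ, ← Fin.succ_castSucc, Dder_X_succ, Derivation.map_smul,
          Δder_X_castSucc, Fin.succ_castSucc, smul_smul, smul_smul,
          ← sub_smul]
        congr 1
        push_cast [Fin.val_succ, Fin.coe_castSucc]
        ring

lemma bracket_HD {n : ℕ} : ⁅Hder n, Dder n⁆ = (2 : ℚ) • Dder n := by
  apply derivation_ext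
  intro s
  rw [Derivation.commutator_apply, Derivation.smul_apply]
  induction s using Fin.cases with
  | zero =>
    rw [Dder_X_zero, map_zero, Hder_X, Derivation.map_smul, Dder_X_zero]
    simp
  | succ j =>
    rw [Dder_X_succ, Derivation.map_smul, Hder_X, Hder_X, Derivation.map_smul,
      Dder_X_succ, smul_smul, smul_smul, ← sub_smul, smul_smul]
    congr 1
    push_cast [Fin.val_succ, Fin.coe_castSucc]
    ring


lemma Dop_apply {n : ℕ} (p : Rng n) : Dop n p = Dder n p := by
  rw [Dop, Dder, LinearMap.sum_apply, der_sum_apply]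
  refine Finset.sum_congr rfl fun i _ => ?_
  rw [LinearMap.smul_apply, LinearMap.comp_apply, LinearMap.mulLeft_apply,
    Derivation.smul_apply, Derivation.smul_apply, smul_eq_mul]
  rfl

lemma Δop_apply {n : ℕ} (p : Rng n) : Δop n p = Δder n p := by
  rw [Δop, Δder, LinearMap.sum_apply, der_sum_apply]
  refine Finset.sum_congr rfl fun i _ => ?_
  rw [LinearMap.smul_apply, LinearMap.comp_apply, LinearMap.mulLeft_apply,
    Derivation.smul_apply, Derivation.smul_apply, smul_eq_mul]
  rfl

lemma comm_DΔ {n : ℕ} (p : Rng n) :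
    Dop n (Δop n p) - Δop n (Dop n p) = Hder n p := by
  rw [Δop_apply, Dop_apply, Dop_apply, Δop_apply, ← Derivation.commutator_apply, bracket_DΔ]

lemma comm_HD {n : ℕ} (p : Rng n) :
    Hder n (Dop n p) = Dop n (Hder n p) + (2 : ℚ) • Dop n p := by
  have h := congrArg (fun d : Derivation ℚ (Rng n) (Rng n) => d p) (bracket_HD (n := n))
  simp only [Derivation.commutator_apply, Derivation.smul_apply] at h
  rw [Dop_apply, Dop_apply]
  exact sub_eq_iff_eq_add'.mp h

lemma Hder_prod {n : ℕ} {ι : Type*} [Fintype ι] (v : ι → Fin (n+1)) (s : Finset ι) :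
    Hder n (∏ j ∈ s, X (v j)) =
      (∑ j ∈ s, ((n : ℚ) - 2 * (v j : ℕ))) • ∏ j ∈ s, X (v j) := by
  induction s using Finset.cons_induction with
  | empty => simp
  | cons a s ha ih =>
    rw [Finset.prod_cons, Derivation.leibniz, ih, Hder_X, Finset.sum_cons]
    simp only [smul_eq_mul, add_smul, smul_mul_assoc, mul_smul_comm, smul_smul]
    rw [mul_comm _ (X (v a)), add_comm]

/-- Hilbert's second identity
`D^i Δ (a_λ) - Δ D^i (a_λ) = i (c + i - 1) D^{i-1} (a_λ)` with `c = nk - 2m`. -/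
theorem hilbert_second_identity (n k m : ℕ) (hm : m ≤ n * k)
    (l : Fin k → ℕ) (hanti : ∀ j j' : Fin k, j ≤ j' → l j' ≤ l j)
    (hle : ∀ j, l j ≤ n) (hsum : ∑ j, l j = m)
    (aLam : MvPolynomial (Fin (n+1)) ℚ)
    (haLam : aLam = ∏ j : Fin k, X (⟨l j, Nat.lt_succ_of_le (hle j)⟩ : Fin (n+1)))
    (i : ℕ) (hi : 1 ≤ i) :
    (Dop n ^ i) (Δop n aLam) - Δop n ((Dop n ^ i) aLam) =
      (((i : ℤ) * (((n : ℤ) * k - 2 * m) + i - 1) : ℤ) : ℚ) • (Dop n ^ (i - 1)) aLam := by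
  have hc : Hder n aLam = ((n : ℚ) * k - 2 * m) • aLam := by
    rw [haLam, Hder_prod]
    congr 1
    have h2 : (∑ j : Fin k, (l j : ℚ)) = (m : ℚ) := by
      rw [← Nat.cast_sum, hsum]
    simp only [Fin.val_mk]
    rw [Finset.sum_sub_distrib, Finset.sum_const, Finset.card_univ, Fintype.card_fin,
      ← Finset.mul_sum, h2, nsmul_eq_mul]
    ring
  have key2 : ∀ j : ℕ, Hder n ((Dop n ^ j) aLam) =
      (((n : ℚ) * k - 2 * m) + 2 * j) • (Dop n ^ j) aLam := by
    intro j
    induction j with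
    | zero => simpa using hc
    | succ j ih =>
      rw [pow_succ', Module.End.mul_apply, comm_HD, ih, LinearMap.map_smul, ← add_smul]
      congr 1
      push_cast
      ring
  induction i, hi using Nat.le_induction with
  | base =>
    simp only [pow_one, Nat.sub_self, pow_zero, Module.End.one_apply]
    rw [comm_DΔ, hc]
    congr 1
    push_cast
    ring
  | succ i hi ih =>
    rw [pow_succ', Module.End.mul_apply, Module.End.mul_apply,
      sub_eq_iff_eq_add.mp ih, map_add, LinearMap.map_smul]
    have h2 : Dop n ((Dop n ^ (i-1)) aLam) = (Dop n ^ i) aLam := by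
      rw [← Module.End.mul_apply, ← pow_succ']
      have : i - 1 + 1 = i := by omega
      rw [this]
    rw [h2, Nat.add_sub_cancel, add_sub_assoc, comm_DΔ, key2 i, ← add_smul]
    congr 1
    push_cast
    ring
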